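/- arXiv:1312.5598 — 7 statements merged into one kernel-verified Lean document; each statement's English description precedes it below -/
import Mathlib

section
/- Let G = (V,E) be a finite simple undirected connected graph. Then ν̄_G ≠ ν̂_G if and only if ν̄_G < 0. -/
open Finset

variable {V : Type*}

/-- `N(T)`: the set of vertices adjacent to at least one vertex of `T`. -/
def nbhd [Fintype V] [DecidableEq V] (G : SimpleGraph V) [DecidableRel G.Adj]
    (T : Finset V) : Finset V :=
  Finset.univ.filter fun j => ∃ i ∈ T, G.Adj i j

/-- The vulnerability function `v_G(T) = |T| - |N(T)|`. -/
def vuln [Fintype V] [DecidableEq V] (G : SimpleGraph V) [DecidableRel G.Adj]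
    (T : Finset V) : ℤ :=
  (T.card : ℤ) - ((nbhd G T).card : ℤ)

/-- `S` is an independent set of `G`. -/
def IsIndepF (G : SimpleGraph V) (S : Finset V) : Prop :=
  ∀ i ∈ S, ∀ j ∈ S, ¬ G.Adj i j

/-- Zhang-type lemma: removing from `T` the vertices in `N(T)` yields an independent set
whose vulnerability is at least that of `T`. -/
lemma vuln_sdiff_nbhd_ge [Fintype V] [DecidableEq V] (G : SimpleGraph V) [DecidableRel G.Adj]
    (T : Finset V) :
    IsIndepF G (T \ nbhd G T) ∧ vuln G T ≤ vuln G (T \ nbhd G T) := by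
  set S := T \ nbhd G T with hSdef
  have hmemN : ∀ j, j ∈ nbhd G T ↔ ∃ i ∈ T, G.Adj i j := by
    intro j; simp [nbhd]
  have hmemNS : ∀ j, j ∈ nbhd G S ↔ ∃ i ∈ S, G.Adj i j := by
    intro j; simp [nbhd]
  have hindep : IsIndepF G S := by
    intro i hi j hj hadj
    rw [hSdef, Finset.mem_sdiff] at hi hj
    exact hj.2 ((hmemN j).2 ⟨i, hi.1, hadj⟩)
  refine ⟨hindep, ?_⟩
  -- N(S) and T ∩ N(T) are disjoint subsets of N(T)
  have hsub : nbhd G S ⊆ nbhd G T := by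
    intro j hj
    obtain ⟨i, hi, hadj⟩ := (hmemNS j).1 hj
    rw [hSdef, Finset.mem_sdiff] at hi
    exact (hmemN j).2 ⟨i, hi.1, hadj⟩
  have hdisj : Disjoint (nbhd G S) (T ∩ nbhd G T) := by
    rw [Finset.disjoint_left]
    intro b hb hb'
    obtain ⟨i, hi, hadj⟩ := (hmemNS b).1 hb
    rw [hSdef, Finset.mem_sdiff] at hi
    rw [Finset.mem_inter] at hb'
    exact hi.2 ((hmemN i).2 ⟨b, hb'.1, hadj.symm⟩)
  have hunion : nbhd G S ∪ (T ∩ nbhd G T) ⊆ nbhd G T := by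
    intro x hx
    rcases Finset.mem_union.1 hx with h | h
    · exact hsub h
    · exact (Finset.mem_inter.1 h).2
  have hcard : (nbhd G S).card + (T ∩ nbhd G T).card ≤ (nbhd G T).card := by
    have := Finset.card_le_card hunion
    rwa [Finset.card_union_of_disjoint hdisj] at this
  have hScard : S.card + (T ∩ nbhd G T).card = T.card := by
    rw [hSdef]; exact Finset.card_sdiff_add_card_inter T (nbhd G T)
  unfold vuln
  have h1 : ((nbhd G S).card : ℤ) + ((T ∩ nbhd G T).card : ℤ) ≤ ((nbhd G T).card : ℤ) := by
    exact_mod_cast hcard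
  have h2 : (S.card : ℤ) + ((T ∩ nbhd G T).card : ℤ) = (T.card : ℤ) := by
    exact_mod_cast hScard
  linarith

/-- For a finite simple undirected connected graph `G`,
`ν̄_G ≠ ν̂_G` if and only if `ν̄_G < 0`, where `ν̄_G` is the maximum of `v_G` over nonempty
independent sets and `ν̂_G` is the maximum of `v_G` over all subsets of `V`. -/
theorem vulnerability_ne_weakVulnerability_iff_neg
    [Fintype V] [DecidableEq V] (G : SimpleGraph V) [DecidableRel G.Adj]
    (hconn : G.Connected) (nuBar nuHat : ℤ)
    (hBar : IsGreatest {x : ℤ | ∃ S : Finset V, S.Nonempty ∧ IsIndepF G S ∧ vuln G S = x} nuBar)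
    (hHat : IsGreatest {x : ℤ | ∃ T : Finset V, vuln G T = x} nuHat) :
    nuBar ≠ nuHat ↔ nuBar < 0 := by
  obtain ⟨⟨T, hT⟩, hHatUB⟩ := hHat
  obtain ⟨hBarMem, hBarUB⟩ := hBar
  have hvempty : vuln G (∅ : Finset V) = 0 := by
    simp [vuln, nbhd]
  have hhat0 : 0 ≤ nuHat := by
    have : vuln G (∅ : Finset V) ≤ nuHat := hHatUB ⟨∅, rfl⟩
    omega
  have hbarle : nuBar ≤ nuHat := by
    obtain ⟨S, _, _, hS⟩ := hBarMem
    exact hHatUB ⟨S, hS⟩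
  constructor
  · intro hne
    by_contra h
    push_neg at h
    obtain ⟨hindep, hge⟩ := vuln_sdiff_nbhd_ge G T
    rcases Finset.eq_empty_or_nonempty (T \ nbhd G T) with he | hne'
    · rw [he, hvempty] at hge
      omega
    · have : vuln G (T \ nbhd G T) ≤ nuBar := hBarUB ⟨T \ nbhd G T, hne', hindep, rfl⟩
      omega
  · intro hlt
    omega
end

section
/- Let G = (V,E) be a finite simple undirected connected graph. Then ν̂_G, the maximum of v_G(T) over all subsets T ⊆ V, equals the maximum of v_G(S) over all independent sets S ⊆ V (the empty set included). -/
open Finset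

variable {V : Type*}

lemma mem_nbhd_iff [Fintype V] [DecidableEq V] (G : SimpleGraph V) [DecidableRel G.Adj]
    (T : Finset V) (j : V) : j ∈ nbhd G T ↔ ∃ i ∈ T, G.Adj i j := by
  simp [nbhd]

/-- For a finite simple undirected connected graph `G`,
`ν̂_G`, the maximum of `v_G(T)` over all subsets `T ⊆ V`, equals the maximum of `v_G(S)`
over all independent sets `S ⊆ V` (the empty set included). -/
theorem weakVulnerability_eq_max_over_indepSets
    [Fintype V] [DecidableEq V] (G : SimpleGraph V) [DecidableRel G.Adj]
    (hconn : G.Connected) (nuHat : ℤ)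
    (hHat : IsGreatest {x : ℤ | ∃ T : Finset V, vuln G T = x} nuHat) :
    IsGreatest {x : ℤ | ∃ S : Finset V, IsIndepF G S ∧ vuln G S = x} nuHat := by
  obtain ⟨⟨T, hT⟩, hub⟩ := hHat
  set S : Finset V := T \ nbhd G T with hS
  -- vertices of S have no neighbor in T
  have hSnoT : ∀ s ∈ S, ∀ t ∈ T, ¬ G.Adj t s := by
    intro s hs t ht hadj
    have : s ∈ nbhd G T := (mem_nbhd_iff G T s).2 ⟨t, ht, hadj⟩
    exact (Finset.mem_sdiff.1 hs).2 this
  have hindep : IsIndepF G S := by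
    intro i hi j hj hadj
    exact hSnoT j hj i (Finset.mem_sdiff.1 hi).1 hadj
  -- card S = card T - card (T ∩ nbhd G T)
  have hcardS : S.card + (T ∩ nbhd G T).card = T.card :=
    Finset.card_sdiff_add_card_inter T (nbhd G T)
  -- N(S) and T ∩ N(T) are disjoint subsets of N(T)
  have hsub : nbhd G S ∪ (T ∩ nbhd G T) ⊆ nbhd G T := by
    intro x hx
    rcases Finset.mem_union.1 hx with hx | hx
    · obtain ⟨i, hi, hadj⟩ := (mem_nbhd_iff G S x).1 hx
      exact (mem_nbhd_iff G T x).2 ⟨i, (Finset.mem_sdiff.1 hi).1, hadj⟩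
    · exact (Finset.mem_inter.1 hx).2
  have hdisj : Disjoint (nbhd G S) (T ∩ nbhd G T) := by
    rw [Finset.disjoint_left]
    intro x hx hx'
    obtain ⟨i, hi, hadj⟩ := (mem_nbhd_iff G S x).1 hx
    exact hSnoT i hi x (Finset.mem_inter.1 hx').1 hadj.symm
  have hcardN : (nbhd G S).card + (T ∩ nbhd G T).card ≤ (nbhd G T).card := by
    rw [← Finset.card_union_of_disjoint hdisj]
    exact Finset.card_le_card hsub
  have hge : vuln G T ≤ vuln G S := by
    unfold vuln
    have h1 := hcardS
    have h2 := hcardN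
    push_cast
    omega
  have hle : vuln G S ≤ nuHat := hub ⟨S, rfl⟩
  have hSval : vuln G S = nuHat := le_antisymm hle (hT ▸ hge)
  exact ⟨⟨S, hindep, hSval⟩, fun x ⟨S', _, h⟩ => hub ⟨S', h⟩⟩
end

section
/- Let G = (V,E) be a finite simple undirected connected graph. Then |S| < |N(S)| holds for every nonempty independent set S ⊆ V (equivalently ν̄_G < 0) if and only if G is regularizable and G is not an elementary bipartite graph. -/
open Finset

variable {V : Type*}

/-- `H` is regularizable: there is an assignment of strictly positive integer weights to the
edges of `H` such that the weighted degree (sum of the weights of the incident edges) is the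
same value for every vertex. -/
def Regularizable {W : Type*} (H : SimpleGraph W) : Prop :=
  ∃ (w : Sym2 W → ℕ) (c : ℕ), (∀ e ∈ H.edgeSet, 1 ≤ w e) ∧
    ∀ i : W, ∑ᶠ e ∈ H.incidenceSet i, w e = c

/-- `H` is an elementary bipartite graph: `H` is bipartite and every edge of `H` is contained
in a perfect matching. -/
def ElementaryBipartite {W : Type*} (H : SimpleGraph W) : Prop :=
  (∃ V₁ V₂ : Set W, (∀ v, v ∈ V₁ ∨ v ∈ V₂) ∧ (∀ v, ¬(v ∈ V₁ ∧ v ∈ V₂)) ∧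
      ∀ a b, H.Adj a b → (a ∈ V₁ ∧ b ∈ V₂) ∨ (a ∈ V₂ ∧ b ∈ V₁)) ∧
    ∀ e ∈ H.edgeSet, ∃ M : H.Subgraph, M.IsPerfectMatching ∧ e ∈ M.edgeSet

section aux
variable [Fintype V] [DecidableEq V] (G : SimpleGraph V) [DecidableRel G.Adj]

lemma mem_nbhd {T : Finset V} {j : V} : j ∈ nbhd G T ↔ ∃ i ∈ T, G.Adj i j := by
  simp [nbhd]

lemma nbhd_mono {T T' : Finset V} (h : T ⊆ T') : nbhd G T ⊆ nbhd G T' := by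
  intro j hj
  rw [mem_nbhd] at hj ⊢
  obtain ⟨i, hi, ha⟩ := hj
  exact ⟨i, h hi, ha⟩

lemma biUnion_erase_nbr (T : Finset V) (v : V) :
    T.biUnion (fun x => (G.neighborFinset x).erase v) = (nbhd G T).erase v := by
  ext j
  simp only [mem_biUnion, mem_erase, mem_nbhd, SimpleGraph.mem_neighborFinset]
  constructor
  · rintro ⟨x, hx, hj, ha⟩
    exact ⟨hj, x, hx, ha⟩
  · rintro ⟨hj, x, hx, ha⟩
    exact ⟨x, hx, hj, ha⟩

/-- Key lemma A: strict surplus for *all* proper nonempty sets. -/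
lemma lemA (hconn : G.Connected)
    (h : ∀ S : Finset V, S.Nonempty → IsIndepF G S → S.card < (nbhd G S).card)
    (T : Finset V) (hne : T.Nonempty) (hproper : T ≠ univ) :
    T.card < (nbhd G T).card := by
  by_cases hS : (T \ nbhd G T).Nonempty
  · set S₀ := T \ nbhd G T with hS₀
    have hindep : IsIndepF G S₀ := by
      intro i hi j hj hadj
      rw [hS₀, mem_sdiff] at hi hj
      exact hj.2 ((mem_nbhd G).2 ⟨i, hi.1, hadj⟩)
    have hsub : nbhd G S₀ ⊆ nbhd G T \ T := by
      intro j hj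
      rw [mem_sdiff]
      refine ⟨nbhd_mono G (sdiff_subset) hj, ?_⟩
      intro hjT
      rw [mem_nbhd] at hj
      obtain ⟨i, hi, ha⟩ := hj
      rw [hS₀, mem_sdiff] at hi
      exact hi.2 ((mem_nbhd G).2 ⟨j, hjT, ha.symm⟩)
    have h1 : S₀.card < (nbhd G S₀).card := h S₀ hS hindep
    have h2 : (nbhd G S₀).card ≤ (nbhd G T \ T).card := card_le_card hsub
    have h3 : T.card = S₀.card + (T ∩ nbhd G T).card := by
      rw [hS₀]
      exact (Finset.card_sdiff_add_card_inter T (nbhd G T)).symm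
    have h4 : (nbhd G T).card = (nbhd G T \ T).card + (T ∩ nbhd G T).card := by
      rw [Finset.inter_comm]
      exact (Finset.card_sdiff_add_card_inter (nbhd G T) T).symm
    omega
  · rw [not_nonempty_iff_eq_empty, sdiff_eq_empty_iff_subset] at hS
    by_contra hle
    push_neg at hle
    have heq : nbhd G T = T := (Finset.eq_of_subset_of_card_le hS hle).symm
    have hclosed : ∀ a b : V, G.Adj a b → a ∈ T → b ∈ T := by
      intro a b hab ha
      rw [← heq, mem_nbhd]
      exact ⟨a, ha, hab⟩
    obtain ⟨t₀, ht₀⟩ := hne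
    apply hproper
    ext x
    simp only [mem_univ, iff_true]
    obtain ⟨p⟩ := hconn.preconnected t₀ x
    clear hS heq hle
    induction p with
    | nil => exact ht₀
    | cons hadj p ih => exact ih (hclosed _ _ hadj ht₀)

/-- Existence of an adjacency-compatible permutation sending u to v. -/
lemma exists_sigma (hconn : G.Connected)
    (h : ∀ S : Finset V, S.Nonempty → IsIndepF G S → S.card < (nbhd G S).card)
    {u v : V} (huv : G.Adj u v) :
    ∃ σ : V → V, Function.Bijective σ ∧ (∀ x, G.Adj x (σ x)) ∧ σ u = v := by
  have key : ∀ A : Finset V, u ∉ A → A.card ≤ ((nbhd G A).erase v).card := by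
    intro A hA
    rcases A.eq_empty_or_nonempty with rfl | hAne
    · simp
    · have hproper : A ≠ univ := by
        intro hAu; exact hA (hAu ▸ mem_univ u)
      have h1 := lemA G hconn h A hAne hproper
      have h2 : (nbhd G A).card - 1 ≤ ((nbhd G A).erase v).card :=
        Finset.pred_card_le_card_erase
      omega
  set r : V → Finset V := fun x => if x = u then {v} else (G.neighborFinset x).erase v with hr
  have hall : ∀ A : Finset V, A.card ≤ (A.biUnion r).card := by
    intro A
    by_cases hu : u ∈ A
    · have h1 : A.biUnion r = insert v ((A.erase u).biUnion r) := by
        conv_lhs => rw [← Finset.insert_erase hu]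
        rw [Finset.biUnion_insert]
        have : r u = {v} := by simp [hr]
        rw [this, ← Finset.insert_eq]
      have h2 : (A.erase u).biUnion r
          = (A.erase u).biUnion (fun x => (G.neighborFinset x).erase v) := by
        apply Finset.biUnion_congr rfl
        intro x hx
        simp only [hr]
        rw [if_neg (Finset.ne_of_mem_erase hx)]
      have h3 : v ∉ (A.erase u).biUnion r := by
        rw [h2, biUnion_erase_nbr]
        exact Finset.notMem_erase v _
      rw [h1, Finset.card_insert_of_notMem h3, h2, biUnion_erase_nbr]
      have h4 := key (A.erase u) (Finset.notMem_erase u A)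
      have h5 : A.card = (A.erase u).card + 1 := by
        rw [Finset.card_erase_of_mem hu]
        have : 1 ≤ A.card := Finset.card_pos.mpr ⟨u, hu⟩
        omega
      omega
    · have h2 : A.biUnion r = (nbhd G A).erase v := by
        rw [← biUnion_erase_nbr]
        apply Finset.biUnion_congr rfl
        intro x hx
        simp only [hr]
        rw [if_neg (by rintro rfl; exact hu hx)]
      rw [h2]
      exact key A hu
  rw [Finset.all_card_le_biUnion_card_iff_exists_injective] at hall
  obtain ⟨f, hinj, hf⟩ := hall
  refine ⟨f, (Finite.injective_iff_bijective).1 hinj, ?_, ?_⟩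
  · intro x
    by_cases hx : x = u
    · subst hx
      have := hf x
      simp only [hr, if_pos rfl, Finset.mem_singleton] at this
      rw [this]; exact huv
    · have := hf x
      simp only [hr, if_neg hx, Finset.mem_erase, SimpleGraph.mem_neighborFinset] at this
      exact this.2
  · have := hf u
    simp only [hr, if_pos rfl, Finset.mem_singleton] at this
    exact this

lemma wdeg_sigma (σ : V → V) (hbij : Function.Bijective σ) (hadj : ∀ x, G.Adj x (σ x)) (i : V) :
    ∑ e ∈ G.incidenceFinset i, (univ.filter (fun x => s(x, σ x) = e)).card = 2 := by
  have h1 : (univ.filter (fun x => s(x, σ x) ∈ G.incidenceFinset i)).card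
      = ∑ e ∈ G.incidenceFinset i,
        ((univ.filter (fun x => s(x, σ x) ∈ G.incidenceFinset i)).filter
          (fun x => s(x, σ x) = e)).card :=
    Finset.card_eq_sum_card_fiberwise (fun x hx => (mem_filter.1 hx).2)
  have h2 : ∀ e ∈ G.incidenceFinset i,
      ((univ.filter (fun x => s(x, σ x) ∈ G.incidenceFinset i)).filter
        (fun x => s(x, σ x) = e)) = univ.filter (fun x => s(x, σ x) = e) := by
    intro e he
    ext x
    simp only [mem_filter, mem_univ, true_and]
    constructor
    · rintro ⟨-, h⟩; exact h
    · rintro h; exact ⟨h ▸ he, h⟩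
  have h1' := h1.trans (Finset.sum_congr rfl (fun e he => congrArg Finset.card (h2 e he)))
  rw [← h1']
  obtain ⟨y, hy⟩ := hbij.surjective i
  have hset : (univ.filter (fun x => s(x, σ x) ∈ G.incidenceFinset i)) = {i, y} := by
    ext x
    simp only [mem_filter, mem_univ, true_and, SimpleGraph.mem_incidenceFinset,
      SimpleGraph.incidenceSet, Set.mem_setOf_eq, Set.mem_sep_iff, SimpleGraph.mem_edgeSet,
      Sym2.mem_iff, mem_insert, mem_singleton]
    constructor
    · rintro ⟨-, hi | hi⟩
      · exact Or.inl hi.symm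
      · exact Or.inr ((hbij.injective (hy.trans hi)).symm)
    · rintro (rfl | rfl)
      · exact ⟨hadj x, Or.inl rfl⟩
      · exact ⟨hadj x, Or.inr hy.symm⟩
  rw [hset]
  have hne : i ≠ y := by
    rintro rfl
    exact (G.irrefl (hy ▸ hadj i))
  rw [Finset.card_pair hne]

lemma regularizable_of (hconn : G.Connected)
    (h : ∀ S : Finset V, S.Nonempty → IsIndepF G S → S.card < (nbhd G S).card) :
    Regularizable G := by
  classical
  set P := (univ : Finset (V × V)).filter (fun p => G.Adj p.1 p.2) with hP
  have hσ : ∀ p : V × V, ∃ σ : V → V, p ∈ P →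
      (Function.Bijective σ ∧ (∀ x, G.Adj x (σ x)) ∧ σ p.1 = p.2) := by
    intro p
    by_cases hp : p ∈ P
    · have hadj : G.Adj p.1 p.2 := by
        rw [hP, mem_filter] at hp
        exact hp.2
      obtain ⟨σ, h1, h2, h3⟩ := exists_sigma G hconn h hadj
      exact ⟨σ, fun _ => ⟨h1, h2, h3⟩⟩
    · exact ⟨id, fun hh => absurd hh hp⟩
  choose σf hσf using hσ
  refine ⟨fun e => ∑ p ∈ P, (univ.filter (fun x => s(x, σf p x) = e)).card,
    P.card * 2, ?_, ?_⟩
  · intro e he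
    revert he
    induction e using Sym2.ind with
    | _ a b =>
      intro he
      rw [SimpleGraph.mem_edgeSet] at he
      have hp : (a, b) ∈ P := by
        rw [hP, mem_filter]
        exact ⟨mem_univ _, he⟩
      have h1 : 1 ≤ (univ.filter (fun x => s(x, σf (a,b) x) = s(a,b))).card := by
        rw [Nat.succ_le_iff, Finset.card_pos]
        refine ⟨a, ?_⟩
        rw [mem_filter]
        refine ⟨mem_univ _, ?_⟩
        have := (hσf (a,b) hp).2.2
        simp only at this
        rw [this]
      calc 1 ≤ (univ.filter (fun x => s(x, σf (a,b) x) = s(a,b))).card := h1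
        _ ≤ ∑ p ∈ P, (univ.filter (fun x => s(x, σf p x) = s(a,b))).card :=
          Finset.single_le_sum
            (f := fun p => (univ.filter (fun x => s(x, σf p x) = s(a,b))).card)
            (fun _ _ => Nat.zero_le _) hp
  · intro i
    have hcoe : G.incidenceSet i = ↑(G.incidenceFinset i) := by
      rw [SimpleGraph.incidenceFinset, Set.coe_toFinset]
    rw [hcoe, finsum_mem_coe_finset, Finset.sum_comm]
    have : ∀ p ∈ P, ∑ e ∈ G.incidenceFinset i,
        (univ.filter (fun x => s(x, σf p x) = e)).card = 2 := by
      intro p hp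
      exact wdeg_sigma G (σf p) (hσf p hp).1 (hσf p hp).2.1 i
    rw [Finset.sum_congr rfl this, Finset.sum_const, smul_eq_mul]

lemma not_elementary_of (hconn : G.Connected)
    (h : ∀ S : Finset V, S.Nonempty → IsIndepF G S → S.card < (nbhd G S).card) :
    ¬ ElementaryBipartite G := by
  classical
  rintro ⟨⟨V₁, V₂, hcov, hdis, hedge⟩, hpm⟩
  obtain ⟨x₀⟩ := hconn.nonempty
  have hnbr : ∃ y, G.Adj x₀ y := by
    by_contra hno
    push_neg at hno
    have hind : IsIndepF G {x₀} := by
      intro i hi j hj hadj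
      rw [mem_singleton] at hi hj
      subst hi; subst hj
      exact G.irrefl hadj
    have h0 : nbhd G {x₀} = ∅ := by
      ext j
      simp only [mem_nbhd, mem_singleton, notMem_empty, iff_false]
      rintro ⟨i, rfl, ha⟩
      exact hno j ha
    have := h {x₀} ⟨x₀, mem_singleton_self x₀⟩ hind
    rw [h0] at this
    simp at this
  obtain ⟨y₀, hxy⟩ := hnbr
  obtain ⟨M, hM, heM⟩ := hpm s(x₀, y₀) hxy
  choose pf hpf hup using fun v => hM.1 (hM.2 v)
  have hG : ∀ v, G.Adj v (pf v) := fun v => M.adj_sub (hpf v)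
  have hinj : ∀ a b : V, pf a = pf b → a = b := by
    intro a b hab
    have h1 : M.Adj (pf a) a := (hpf a).symm
    have h2 : M.Adj (pf a) b := by
      rw [hab]; exact (hpf b).symm
    have e1 := hup (pf a) a h1
    have e2 := hup (pf a) b h2
    rw [e1, e2]
  have key : ∀ (A B : Set V), (∀ v, v ∈ A ∨ v ∈ B) → (∀ v, ¬(v ∈ A ∧ v ∈ B)) →
      (∀ a b, G.Adj a b → (a ∈ A ∧ b ∈ B) ∨ (a ∈ B ∧ b ∈ A)) → x₀ ∈ A → False := by
    intro A B hcov' hdis' hedge' hx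
    have hmapAB : ∀ v ∈ A, pf v ∈ B := by
      intro v hv
      rcases hedge' v (pf v) (hG v) with ⟨_, hb⟩ | ⟨hb, _⟩
      · exact hb
      · exact absurd ⟨hv, hb⟩ (hdis' v)
    have hmapBA : ∀ v ∈ B, pf v ∈ A := by
      intro v hv
      rcases hedge' v (pf v) (hG v) with ⟨ha, _⟩ | ⟨_, ha⟩
      · exact absurd ⟨ha, hv⟩ (hdis' v)
      · exact ha
    set SA := univ.filter (· ∈ A) with hSA
    set SB := univ.filter (· ∈ B) with hSB
    have hcard1 : SA.card ≤ SB.card := by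
      apply Finset.card_le_card_of_injOn pf
      · intro v hv
        rw [hSA, Finset.mem_coe, mem_filter] at hv
        rw [hSB, Finset.mem_coe, mem_filter]
        exact ⟨mem_univ _, hmapAB v hv.2⟩
      · intro a _ b _ hab
        exact hinj a b hab
    have hcard2 : SB.card ≤ SA.card := by
      apply Finset.card_le_card_of_injOn pf
      · intro v hv
        rw [hSB, Finset.mem_coe, mem_filter] at hv
        rw [hSA, Finset.mem_coe, mem_filter]
        exact ⟨mem_univ _, hmapBA v hv.2⟩
      · intro a _ b _ hab
        exact hinj a b hab
    have hind : IsIndepF G SA := by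
      intro i hi j hj hadj
      rw [hSA, mem_filter] at hi hj
      rcases hedge' i j hadj with ⟨_, hb⟩ | ⟨hb, _⟩
      · exact hdis' j ⟨hj.2, hb⟩
      · exact hdis' i ⟨hi.2, hb⟩
    have hsub : nbhd G SA ⊆ SB := by
      intro j hj
      rw [mem_nbhd] at hj
      obtain ⟨i, hi, ha⟩ := hj
      rw [hSA, mem_filter] at hi
      rw [hSB, mem_filter]
      rcases hedge' i j ha with ⟨_, hb⟩ | ⟨hb, _⟩
      · exact ⟨mem_univ _, hb⟩
      · exact absurd ⟨hi.2, hb⟩ (hdis' i)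
    have hlt := h SA ⟨x₀, by rw [hSA, mem_filter]; exact ⟨mem_univ _, hx⟩⟩ hind
    have := card_le_card hsub
    omega
  rcases hcov x₀ with hx | hx
  · exact key V₁ V₂ hcov hdis hedge hx
  · exact key V₂ V₁ (fun v => (hcov v).symm) (fun v hv => hdis v ⟨hv.2, hv.1⟩)
      (fun a b hab => (hedge a b hab).symm) hx

lemma other_endpoint {e : Sym2 V} {x : V} (he : e ∈ G.edgeSet) (hx : x ∈ e) :
    ∃ y, G.Adj x y ∧ e = s(x, y) := by
  revert he hx
  induction e using Sym2.ind with
  | _ a b =>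
    intro he hx
    rw [SimpleGraph.mem_edgeSet] at he
    rw [Sym2.mem_iff] at hx
    rcases hx with rfl | rfl
    · exact ⟨b, he, rfl⟩
    · exact ⟨a, he.symm, Sym2.eq_swap⟩

lemma indep_pairwiseDisjoint {S : Finset V} (hS : IsIndepF G S) :
    (↑S : Set V).PairwiseDisjoint (fun t => G.incidenceFinset t) := by
  intro a ha b hb hne
  rw [Function.onFun, Finset.disjoint_left]
  intro e hea heb
  rw [SimpleGraph.mem_incidenceFinset] at hea heb
  have he : e ∈ G.edgeSet := hea.1
  have hab : e = s(a, b) := (Sym2.mem_and_mem_iff hne).1 ⟨hea.2, heb.2⟩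
  rw [hab, SimpleGraph.mem_edgeSet] at he
  exact hS a ha b hb he

lemma sum_w_biUnion {w : Sym2 V → ℕ} {c : ℕ}
    (hdeg : ∀ i, ∑ e ∈ G.incidenceFinset i, w e = c)
    {S : Finset V} (hS : IsIndepF G S) :
    ∑ e ∈ S.biUnion (fun t => G.incidenceFinset t), w e = c * S.card := by
  rw [Finset.sum_biUnion (indep_pairwiseDisjoint G hS),
    Finset.sum_congr rfl (fun t _ => hdeg t), Finset.sum_const, smul_eq_mul, mul_comm]

lemma disj_nbhd {S : Finset V} (hS : IsIndepF G S) : Disjoint S (nbhd G S) := by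
  rw [Finset.disjoint_left]
  intro x hx hx'
  rw [mem_nbhd] at hx'
  obtain ⟨i, hi, ha⟩ := hx'
  exact hS i hi x hx ha

lemma biUnion_eq_cover {S : Finset V} (hS : IsIndepF G S) :
    S.biUnion (fun t => G.incidenceFinset t) =
      (nbhd G S).biUnion (fun t => G.incidenceFinset t ∩ S.biUnion (fun t => G.incidenceFinset t)) := by
  apply Finset.Subset.antisymm
  · intro e he
    have he' := he
    rw [Finset.mem_biUnion] at he
    obtain ⟨s', hs', hes⟩ := he
    rw [SimpleGraph.mem_incidenceFinset] at hes
    obtain ⟨y, hxy, rfl⟩ := other_endpoint G hes.1 hes.2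
    rw [Finset.mem_biUnion]
    refine ⟨y, (mem_nbhd G).2 ⟨s', hs', hxy⟩, Finset.mem_inter.2 ⟨?_, he'⟩⟩
    rw [SimpleGraph.mem_incidenceFinset]
    exact (SimpleGraph.mk'_mem_incidenceSet_right_iff G).2 hxy
  · intro e he
    rw [Finset.mem_biUnion] at he
    obtain ⟨t, _, he2⟩ := he
    exact (Finset.mem_inter.1 he2).2

lemma cover_pairwiseDisjoint {S : Finset V} (hS : IsIndepF G S) :
    (↑(nbhd G S) : Set V).PairwiseDisjoint
      (fun t => G.incidenceFinset t ∩ S.biUnion (fun t => G.incidenceFinset t)) := by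
  intro a ha b hb hne
  rw [Function.onFun, Finset.disjoint_left]
  intro e hea heb
  rw [Finset.mem_inter] at hea heb
  have hBS := hea.2
  have hea' := hea.1
  have heb' := heb.1
  rw [SimpleGraph.mem_incidenceFinset] at hea' heb'
  have hab : e = s(a, b) := (Sym2.mem_and_mem_iff hne).1 ⟨hea'.2, heb'.2⟩
  rw [Finset.mem_biUnion] at hBS
  obtain ⟨s', hs', hes⟩ := hBS
  rw [SimpleGraph.mem_incidenceFinset] at hes
  have hs'e : s' ∈ e := hes.2
  rw [hab, Sym2.mem_iff] at hs'e
  have hdisj := disj_nbhd G hS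
  rw [Finset.disjoint_left] at hdisj
  rcases hs'e with rfl | rfl
  · exact hdisj hs' (Finset.mem_coe.1 ha)
  · exact hdisj hs' (Finset.mem_coe.1 hb)

lemma reg_le {w : Sym2 V → ℕ} {c : ℕ}
    (hdeg : ∀ i, ∑ e ∈ G.incidenceFinset i, w e = c)
    {S : Finset V} (hS : IsIndepF G S) :
    c * S.card ≤ c * (nbhd G S).card := by
  calc c * S.card = ∑ e ∈ S.biUnion (fun t => G.incidenceFinset t), w e := (sum_w_biUnion G hdeg hS).symm
    _ = ∑ t ∈ nbhd G S,
        ∑ e ∈ G.incidenceFinset t ∩ S.biUnion (fun t => G.incidenceFinset t), w e := by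
        rw [← Finset.sum_biUnion (cover_pairwiseDisjoint G hS), ← biUnion_eq_cover G hS]
    _ ≤ ∑ t ∈ nbhd G S, c := Finset.sum_le_sum (fun t _ =>
        (Finset.sum_le_sum_of_subset (Finset.inter_subset_left)).trans (le_of_eq (hdeg t)))
    _ = c * (nbhd G S).card := by rw [Finset.sum_const, smul_eq_mul, mul_comm]

lemma reg_lt {w : Sym2 V → ℕ} {c : ℕ}
    (hw : ∀ e ∈ G.edgeSet, 1 ≤ w e)
    (hdeg : ∀ i, ∑ e ∈ G.incidenceFinset i, w e = c)
    {S : Finset V} (hS : IsIndepF G S)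
    {v₀ : V} (hv₀ : v₀ ∈ nbhd G S) {e₀ : Sym2 V} (he₀ : e₀ ∈ G.incidenceFinset v₀)
    (hnot : e₀ ∉ S.biUnion (fun t => G.incidenceFinset t)) :
    c * S.card + 1 ≤ c * (nbhd G S).card := by
  set B := S.biUnion (fun t => G.incidenceFinset t) with hB
  have hw0 : 1 ≤ w e₀ := by
    apply hw
    rw [SimpleGraph.mem_incidenceFinset] at he₀
    exact he₀.1
  have hins : e₀ ∉ G.incidenceFinset v₀ ∩ B := fun hh => hnot (Finset.mem_inter.1 hh).2
  have hv : w e₀ + ∑ e ∈ G.incidenceFinset v₀ ∩ B, w e ≤ c := by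
    rw [← hdeg v₀, ← Finset.sum_insert hins]
    apply Finset.sum_le_sum_of_subset
    exact Finset.insert_subset he₀ (Finset.inter_subset_left)
  have hsum : c * S.card = ∑ t ∈ nbhd G S, ∑ e ∈ G.incidenceFinset t ∩ B, w e := by
    rw [← Finset.sum_biUnion (cover_pairwiseDisjoint G hS), ← biUnion_eq_cover G hS]
    exact (sum_w_biUnion G hdeg hS).symm
  have hsplit : ∑ t ∈ nbhd G S, ∑ e ∈ G.incidenceFinset t ∩ B, w e
      = (∑ e ∈ G.incidenceFinset v₀ ∩ B, w e)
        + ∑ t ∈ (nbhd G S).erase v₀, ∑ e ∈ G.incidenceFinset t ∩ B, w e :=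
    (Finset.add_sum_erase _ _ hv₀).symm
  have hbound : ∑ t ∈ (nbhd G S).erase v₀, ∑ e ∈ G.incidenceFinset t ∩ B, w e
      ≤ ((nbhd G S).card - 1) * c := by
    calc _ ≤ ∑ t ∈ (nbhd G S).erase v₀, c := Finset.sum_le_sum (fun t _ =>
          (Finset.sum_le_sum_of_subset (Finset.inter_subset_left)).trans (le_of_eq (hdeg t)))
      _ = ((nbhd G S).card - 1) * c := by
          rw [Finset.sum_const, smul_eq_mul, Finset.card_erase_of_mem hv₀]
  have hcard1 : 1 ≤ (nbhd G S).card := Finset.card_pos.2 ⟨v₀, hv₀⟩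
  obtain ⟨k, hk⟩ := Nat.exists_eq_add_of_le hcard1
  have hk' : (nbhd G S).card - 1 = k := by omega
  calc c * S.card + 1 ≤ c * S.card + w e₀ := by omega
    _ = w e₀ + ((∑ e ∈ G.incidenceFinset v₀ ∩ B, w e)
        + ∑ t ∈ (nbhd G S).erase v₀, ∑ e ∈ G.incidenceFinset t ∩ B, w e) := by
        rw [hsum, hsplit]; ring
    _ ≤ c + ((nbhd G S).card - 1) * c := by
        have := add_le_add hv hbound
        omega
    _ = c * (nbhd G S).card := by rw [hk', hk]; ring

lemma exists_matching_through
    {w : Sym2 V → ℕ} {c : ℕ} (hc : 0 < c)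
    (hw : ∀ e ∈ G.edgeSet, 1 ≤ w e)
    (hdeg : ∀ i, ∑ e ∈ G.incidenceFinset i, w e = c)
    {S : Finset V} (hSind : IsIndepF G S)
    (hcard : S.card = (nbhd G S).card)
    (hcover : ∀ x : V, x ∈ S ∨ x ∈ nbhd G S)
    {u₀ v₀ : V} (hu₀ : u₀ ∈ S) (hv₀ : v₀ ∈ nbhd G S) (huv : G.Adj u₀ v₀) :
    ∃ M : G.Subgraph, M.IsPerfectMatching ∧ s(u₀, v₀) ∈ M.edgeSet := by
  classical
  have hdisj' := disj_nbhd G hSind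
  rw [Finset.disjoint_left] at hdisj'
  have hdisj : ∀ {a : V}, a ∈ S → a ∉ nbhd G S := fun ha => hdisj' ha
  have hall : ∀ A : Finset {x // x ∈ S.erase u₀},
      A.card ≤ (A.biUnion (fun x => (G.neighborFinset ↑x).erase v₀)).card := by
    intro A
    set T := A.image Subtype.val with hT
    have hTcard : T.card = A.card := Finset.card_image_of_injective A Subtype.val_injective
    have hTsub : T ⊆ S.erase u₀ := by
      intro x hx
      rw [hT, Finset.mem_image] at hx
      obtain ⟨y, _, rfl⟩ := hx
      exact y.2
    have hTS : T ⊆ S := hTsub.trans (Finset.erase_subset _ _)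
    have hTind : IsIndepF G T := fun i hi j hj => hSind i (hTS hi) j (hTS hj)
    have hbu : A.biUnion (fun x => (G.neighborFinset ↑x).erase v₀)
        = (nbhd G T).erase v₀ := by
      rw [← biUnion_erase_nbr, hT, Finset.image_biUnion]
    rw [hbu, ← hTcard]
    by_cases hv : v₀ ∈ nbhd G T
    · have he₀ : s(u₀, v₀) ∈ G.incidenceFinset v₀ := by
        rw [SimpleGraph.mem_incidenceFinset]
        exact (SimpleGraph.mk'_mem_incidenceSet_right_iff G).2 huv
      have hnot : s(u₀, v₀) ∉ T.biUnion (fun t => G.incidenceFinset t) := by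
        rw [Finset.mem_biUnion]
        rintro ⟨s', hs', hes⟩
        rw [SimpleGraph.mem_incidenceFinset] at hes
        have hmem := hes.2
        rw [Sym2.mem_iff] at hmem
        rcases hmem with rfl | rfl
        · exact Finset.notMem_erase _ _ (hTsub hs')
        · exact hdisj (hTS hs') hv₀
      have hlt := reg_lt G hw hdeg hTind hv he₀ hnot
      have hstrict : T.card < (nbhd G T).card :=
        Nat.lt_of_mul_lt_mul_left (a := c) (by omega)
      rw [Finset.card_erase_of_mem hv]
      omega
    · rw [Finset.erase_eq_of_notMem hv]
      exact Nat.le_of_mul_le_mul_left (reg_le G hdeg hTind) hc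
  rw [Finset.all_card_le_biUnion_card_iff_exists_injective] at hall
  obtain ⟨f, hfinj, hf⟩ := hall
  have hfadj : ∀ x : {x // x ∈ S.erase u₀}, G.Adj ↑x (f x) := by
    intro x
    have := hf x
    rw [Finset.mem_erase, SimpleGraph.mem_neighborFinset] at this
    exact this.2
  have hfnev : ∀ x, f x ≠ v₀ := fun x => (Finset.mem_erase.1 (hf x)).1
  have hfN : ∀ x, f x ∈ nbhd G S :=
    fun x => (mem_nbhd G).2 ⟨↑x, Finset.mem_of_mem_erase x.2, hfadj x⟩
  have hfnS : ∀ x, f x ∉ S := fun x hx => hdisj hx (hfN x)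
  have hv₀S : v₀ ∉ S := fun h => hdisj h hv₀
  have huvne : u₀ ≠ v₀ := fun h => hv₀S (h ▸ hu₀)
  have himg : (univ : Finset {x // x ∈ S.erase u₀}).image f = (nbhd G S).erase v₀ := by
    apply Finset.eq_of_subset_of_card_le
    · intro z hz
      rw [Finset.mem_image] at hz
      obtain ⟨x, _, rfl⟩ := hz
      rw [Finset.mem_erase]
      exact ⟨hfnev x, hfN x⟩
    · rw [Finset.card_image_of_injective _ hfinj, Finset.card_univ, Fintype.card_coe,
        Finset.card_erase_of_mem hv₀, Finset.card_erase_of_mem hu₀, hcard]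
  have hsurj : ∀ z, z ∈ (nbhd G S).erase v₀ → ∃ x, f x = z := by
    intro z hz
    rw [← himg, Finset.mem_image] at hz
    obtain ⟨x, _, hx⟩ := hz
    exact ⟨x, hx⟩
  refine ⟨{ verts := Set.univ
            Adj := fun a b => (a = u₀ ∧ b = v₀) ∨ (a = v₀ ∧ b = u₀) ∨
              (∃ h : a ∈ S.erase u₀, f ⟨a, h⟩ = b) ∨ (∃ h : b ∈ S.erase u₀, f ⟨b, h⟩ = a)
            adj_sub := ?_
            edge_vert := fun _ => Set.mem_univ _
            symm := ⟨?_⟩ }, ⟨?_, fun v => Set.mem_univ v⟩, ?_⟩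
  · rintro a b (⟨rfl, rfl⟩ | ⟨rfl, rfl⟩ | ⟨h, rfl⟩ | ⟨h, hfb⟩)
    · exact huv
    · exact huv.symm
    · exact hfadj ⟨a, h⟩
    · rw [← hfb]
      exact (hfadj ⟨b, h⟩).symm
  · rintro a b (⟨rfl, rfl⟩ | ⟨rfl, rfl⟩ | ⟨h, hfb⟩ | ⟨h, hfb⟩)
    · exact Or.inr (Or.inl ⟨rfl, rfl⟩)
    · exact Or.inl ⟨rfl, rfl⟩
    · exact Or.inr (Or.inr (Or.inr ⟨h, hfb⟩))
    · exact Or.inr (Or.inr (Or.inl ⟨h, hfb⟩))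
  · intro v _
    by_cases hv1 : v = u₀
    · subst hv1
      refine ⟨v₀, Or.inl ⟨rfl, rfl⟩, ?_⟩
      rintro y (⟨-, rfl⟩ | ⟨h, -⟩ | ⟨h, -⟩ | ⟨h, hfb⟩)
      · rfl
      · exact absurd h huvne
      · exact absurd h (Finset.notMem_erase _ _)
      · exact absurd (by rw [hfb]; exact hu₀) (hfnS ⟨y, h⟩)
    by_cases hv2 : v = v₀
    · subst hv2
      refine ⟨u₀, Or.inr (Or.inl ⟨rfl, rfl⟩), ?_⟩
      rintro y (⟨h, -⟩ | ⟨-, rfl⟩ | ⟨h, -⟩ | ⟨h, hfb⟩)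
      · exact absurd h (Ne.symm huvne)
      · rfl
      · exact absurd (Finset.mem_of_mem_erase h) hv₀S
      · exact absurd hfb (hfnev ⟨y, h⟩)
    by_cases hv3 : v ∈ S.erase u₀
    · refine ⟨f ⟨v, hv3⟩, Or.inr (Or.inr (Or.inl ⟨hv3, rfl⟩)), ?_⟩
      rintro y (⟨rfl, -⟩ | ⟨rfl, -⟩ | ⟨h, hfy⟩ | ⟨h, hfy⟩)
      · exact absurd rfl hv1
      · exact absurd rfl hv2
      · rw [← hfy]
      · exact absurd (by rw [hfy]; exact Finset.mem_of_mem_erase hv3) (hfnS ⟨y, h⟩)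
    · have hvN : v ∈ (nbhd G S).erase v₀ := by
        rw [Finset.mem_erase]
        refine ⟨hv2, ?_⟩
        rcases hcover v with h | h
        · exact absurd (Finset.mem_erase.2 ⟨hv1, h⟩) hv3
        · exact h
      obtain ⟨x, hx⟩ := hsurj v hvN
      refine ⟨↑x, Or.inr (Or.inr (Or.inr ⟨x.2, by rw [Subtype.coe_eta]; exact hx⟩)), ?_⟩
      rintro y (⟨rfl, -⟩ | ⟨rfl, -⟩ | ⟨h, -⟩ | ⟨h, hfy⟩)
      · exact absurd rfl hv1
      · exact absurd rfl hv2
      · exact absurd h hv3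
      · have hxy : (⟨y, h⟩ : {x // x ∈ S.erase u₀}) = x := hfinj (by rw [hfy, hx])
        exact congrArg Subtype.val hxy
  · exact Or.inl ⟨rfl, rfl⟩

lemma walk_closed {P : V → Prop} (hstep : ∀ a b, G.Adj a b → P a → P b) :
    ∀ {a x : V}, G.Walk a x → P a → P x := by
  intro a x p
  induction p with
  | nil => exact id
  | cons hadj p ih => exact fun ha => ih (hstep _ _ hadj ha)

lemma lhs_of_reg (hconn : G.Connected) (hreg : Regularizable G)
    (hNE : ¬ ElementaryBipartite G) :
    ∀ S : Finset V, S.Nonempty → IsIndepF G S → S.card < (nbhd G S).card := by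
  classical
  obtain ⟨w, c, hw, hdeg'⟩ := hreg
  have hdeg : ∀ i, ∑ e ∈ G.incidenceFinset i, w e = c := by
    intro i
    have hcoe : G.incidenceSet i = ↑(G.incidenceFinset i) := by
      rw [SimpleGraph.incidenceFinset, Set.coe_toFinset]
    have := hdeg' i
    rwa [hcoe, finsum_mem_coe_finset] at this
  have hedge : ∃ a b : V, G.Adj a b := by
    by_contra hno
    push_neg at hno
    apply hNE
    refine ⟨⟨Set.univ, ∅, fun v => Or.inl trivial, fun v hv => hv.2,
      fun a b hab => absurd hab (hno a b)⟩, ?_⟩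
    intro e he
    exfalso
    revert he
    induction e using Sym2.ind with
    | _ a b =>
      intro he
      rw [SimpleGraph.mem_edgeSet] at he
      exact absurd he (hno a b)
  obtain ⟨a, b, hab⟩ := hedge
  have hnbr : ∀ z : V, ∃ y, G.Adj z y := by
    intro z
    obtain ⟨p⟩ := hconn.preconnected z a
    cases p with
    | nil => exact ⟨b, hab⟩
    | cons h _ => exact ⟨_, h⟩
  have hc : 0 < c := by
    obtain ⟨y, hy⟩ := hnbr a
    have hmem : s(a, y) ∈ G.incidenceFinset a := by
      rw [SimpleGraph.mem_incidenceFinset]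
      exact (SimpleGraph.mk'_mem_incidenceSet_left_iff G).2 hy
    have h1 : 1 ≤ w s(a, y) := hw _ hy
    have h2 := Finset.single_le_sum (f := w) (fun _ _ => Nat.zero_le _) hmem
    rw [hdeg a] at h2
    omega
  intro S hSne hSind
  by_contra hge
  push_neg at hge
  have hle : S.card ≤ (nbhd G S).card := Nat.le_of_mul_le_mul_left (reg_le G hdeg hSind) hc
  have hcard : S.card = (nbhd G S).card := le_antisymm hle hge
  have hdisjSN := disj_nbhd G hSind
  have hincl : ∀ t ∈ nbhd G S, ∀ e ∈ G.incidenceFinset t,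
      e ∈ S.biUnion (fun t => G.incidenceFinset t) := by
    intro t ht e he
    by_contra hnot
    have h3 := reg_lt G hw hdeg hSind ht he hnot
    rw [hcard] at h3
    omega
  have hNN : ∀ t ∈ nbhd G S, ∀ x, G.Adj t x → x ∈ S := by
    intro t ht x hx
    have he : s(t, x) ∈ G.incidenceFinset t := by
      rw [SimpleGraph.mem_incidenceFinset]
      exact (SimpleGraph.mk'_mem_incidenceSet_left_iff G).2 hx
    have hB := hincl t ht _ he
    rw [Finset.mem_biUnion] at hB
    obtain ⟨s', hs', hes⟩ := hB
    rw [SimpleGraph.mem_incidenceFinset] at hes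
    have hmem := hes.2
    rw [Sym2.mem_iff] at hmem
    rcases hmem with rfl | rfl
    · exact absurd ht (Finset.disjoint_left.1 hdisjSN hs')
    · exact hs'
  obtain ⟨s₀, hs₀⟩ := hSne
  have hcover : ∀ x : V, x ∈ S ∨ x ∈ nbhd G S := by
    intro x
    obtain ⟨p⟩ := hconn.preconnected s₀ x
    refine walk_closed G (P := fun z => z ∈ S ∨ z ∈ nbhd G S) ?_ p (Or.inl hs₀)
    intro a' b' hadj ha'
    rcases ha' with ha' | ha'
    · exact Or.inr ((mem_nbhd G).2 ⟨a', ha', hadj⟩)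
    · exact Or.inl (hNN a' ha' b' hadj)
  apply hNE
  refine ⟨⟨↑S, ↑(nbhd G S), ?_, ?_, ?_⟩, ?_⟩
  · intro v
    rcases hcover v with hv | hv
    · exact Or.inl (Finset.mem_coe.2 hv)
    · exact Or.inr (Finset.mem_coe.2 hv)
  · intro v hv
    exact Finset.disjoint_left.1 hdisjSN (Finset.mem_coe.1 hv.1) (Finset.mem_coe.1 hv.2)
  · intro x y hxy
    rcases hcover x with hx | hx
    · exact Or.inl ⟨Finset.mem_coe.2 hx, Finset.mem_coe.2 ((mem_nbhd G).2 ⟨x, hx, hxy⟩)⟩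
    · exact Or.inr ⟨Finset.mem_coe.2 hx, Finset.mem_coe.2 (hNN x hx y hxy)⟩
  · intro e he
    revert he
    induction e using Sym2.ind with
    | _ x y =>
      intro he
      rw [SimpleGraph.mem_edgeSet] at he
      rcases hcover x with hx | hx
      · have hy : y ∈ nbhd G S := (mem_nbhd G).2 ⟨x, hx, he⟩
        exact exists_matching_through G hc hw hdeg hSind hcard hcover hx hy he
      · have hy : y ∈ S := hNN x hx y he
        obtain ⟨M, hM, hMe⟩ := exists_matching_through G hc hw hdeg hSind hcard hcover hy hx he.symm
        exact ⟨M, hM, by rwa [Sym2.eq_swap]⟩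
end aux

/-- For a finite simple undirected connected graph `G`, `|S| < |N(S)|` holds for every nonempty
independent set `S ⊆ V` (equivalently `ν̄_G < 0`) if and only if `G` is regularizable and `G`
is not an elementary bipartite graph. -/
theorem neg_vulnerability_iff_regularizable_not_elementaryBipartite
    [Fintype V] [DecidableEq V] (G : SimpleGraph V) [DecidableRel G.Adj]
    (hconn : G.Connected) :
    (∀ S : Finset V, S.Nonempty → IsIndepF G S → S.card < (nbhd G S).card) ↔
      (Regularizable G ∧ ¬ ElementaryBipartite G) := by
  constructor
  · intro h
    exact ⟨regularizable_of G hconn h, not_elementary_of G hconn h⟩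
  · rintro ⟨hreg, hNE⟩
    exact lhs_of_reg G hconn hreg hNE
end

section
/- Let G = (V,E) be a finite simple undirected connected graph. Then p̄_G = ν̂_G and q̄_G = ν̄_G, where p̄_G = max over all T ⊆ V of p_G(T), q̄_G = max over all T ⊆ V with S(T) ≠ ∅ of q_G(T), ν̂_G = max over all T ⊆ V of v_G(T), and ν̄_G = max over nonempty independent sets S of v_G(S). -/
open Finset

variable {V : Type*}

/-- `B(T) = {i ∈ V : N({i}) ⊆ T}`: the set of vertices all of whose neighbors lie in `T`. -/
def bset [Fintype V] [DecidableEq V] (G : SimpleGraph V) [DecidableRel G.Adj]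
    (T : Finset V) : Finset V :=
  Finset.univ.filter fun i => ∀ j, G.Adj i j → j ∈ T

/-- `S(T) = B(T) \ T`. -/
def sset [Fintype V] [DecidableEq V] (G : SimpleGraph V) [DecidableRel G.Adj]
    (T : Finset V) : Finset V :=
  bset G T \ T

/-- The power function `p_G(T) = |B(T)| - |T|`. -/
def powerP [Fintype V] [DecidableEq V] (G : SimpleGraph V) [DecidableRel G.Adj]
    (T : Finset V) : ℤ :=
  ((bset G T).card : ℤ) - (T.card : ℤ)

/-- The power function `q_G(T) = |S(T)| - |T|`. -/
def powerQ [Fintype V] [DecidableEq V] (G : SimpleGraph V) [DecidableRel G.Adj]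
    (T : Finset V) : ℤ :=
  ((sset G T).card : ℤ) - (T.card : ℤ)


lemma bset_eq_compl [Fintype V] [DecidableEq V] (G : SimpleGraph V) [DecidableRel G.Adj]
    (T : Finset V) : bset G T = (nbhd G Tᶜ)ᶜ := by
  ext i
  simp only [bset, nbhd, mem_filter, mem_univ, true_and, mem_compl, not_exists, not_and]
  constructor
  · intro h j hj hadj
    exact hj (h j hadj.symm)
  · intro h j hadj
    by_contra hj
    exact h j hj hadj.symm

lemma powerP_eq_vuln_compl [Fintype V] [DecidableEq V] (G : SimpleGraph V)
    [DecidableRel G.Adj] (T : Finset V) : powerP G T = vuln G Tᶜ := by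
  unfold powerP vuln
  rw [bset_eq_compl, card_compl, card_compl]
  have h1 := card_le_univ (nbhd G Tᶜ)
  have h2 := card_le_univ T
  simp only [Fintype.card] at *
  omega

lemma sset_indep [Fintype V] [DecidableEq V] (G : SimpleGraph V) [DecidableRel G.Adj]
    (T : Finset V) : IsIndepF G (sset G T) := by
  intro i hi j hj hadj
  simp only [sset, mem_sdiff, bset, mem_filter, mem_univ, true_and] at hi hj
  exact hj.2 (hi.1 j hadj)

lemma nbhd_sset_subset [Fintype V] [DecidableEq V] (G : SimpleGraph V) [DecidableRel G.Adj]
    (T : Finset V) : nbhd G (sset G T) ⊆ T := by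
  intro j hj
  simp only [nbhd, mem_filter, mem_univ, true_and] at hj
  obtain ⟨i, hi, hadj⟩ := hj
  simp only [sset, mem_sdiff, bset, mem_filter, mem_univ, true_and] at hi
  exact hi.1 j hadj

lemma subset_sset_nbhd [Fintype V] [DecidableEq V] (G : SimpleGraph V) [DecidableRel G.Adj]
    {S : Finset V} (hind : IsIndepF G S) : S ⊆ sset G (nbhd G S) := by
  intro i hi
  simp only [sset, mem_sdiff, bset, nbhd, mem_filter, mem_univ, true_and]
  refine ⟨fun j hadj => ⟨i, hi, hadj⟩, ?_⟩
  rintro ⟨k, hk, hadj⟩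
  exact hind k hk i hi hadj

/-- For a finite simple undirected connected graph `G`, `p̄_G = ν̂_G` and `q̄_G = ν̄_G`, where
`p̄_G` is the maximum of `p_G` over all subsets, `q̄_G` is the maximum of `q_G` over all
subsets `T` with `S(T) ≠ ∅`, `ν̂_G` is the maximum of `v_G` over all subsets, and `ν̄_G` is
the maximum of `v_G` over nonempty independent sets. -/
theorem power_eq_vulnerability
    [Fintype V] [DecidableEq V] (G : SimpleGraph V) [DecidableRel G.Adj]
    (hconn : G.Connected) (pBar qBar nuHat nuBar : ℤ)
    (hp : IsGreatest {x : ℤ | ∃ T : Finset V, powerP G T = x} pBar)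
    (hq : IsGreatest {x : ℤ | ∃ T : Finset V, (sset G T).Nonempty ∧ powerQ G T = x} qBar)
    (hHat : IsGreatest {x : ℤ | ∃ T : Finset V, vuln G T = x} nuHat)
    (hBar : IsGreatest {x : ℤ | ∃ S : Finset V, S.Nonempty ∧ IsIndepF G S ∧ vuln G S = x}
      nuBar) :
    pBar = nuHat ∧ qBar = nuBar := by
  constructor
  · apply le_antisymm
    · obtain ⟨T, hT⟩ := hp.1
      have := hHat.2 ⟨Tᶜ, rfl⟩
      rw [← powerP_eq_vuln_compl] at this
      omega
    · obtain ⟨T, hT⟩ := hHat.1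
      have : powerP G Tᶜ = vuln G T := by rw [powerP_eq_vuln_compl, compl_compl]
      have h2 := hp.2 ⟨Tᶜ, rfl⟩
      omega
  · apply le_antisymm
    · obtain ⟨T, hne, hT⟩ := hq.1
      have h1 : vuln G (sset G T) ≤ nuBar :=
        hBar.2 ⟨sset G T, hne, sset_indep G T, rfl⟩
      have h2 : ((nbhd G (sset G T)).card : ℤ) ≤ T.card := by
        exact_mod_cast card_le_card (nbhd_sset_subset G T)
      unfold powerQ at hT
      unfold vuln at h1
      omega
    · obtain ⟨S, hne, hind, hS⟩ := hBar.1
      have hsub := subset_sset_nbhd G hind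
      have h1 : qBar ∈ upperBounds _ := hq.2
      have h2 := hq.2 ⟨nbhd G S, hne.mono hsub, rfl⟩
      have h3 : (S.card : ℤ) ≤ (sset G (nbhd G S)).card := by
        exact_mod_cast card_le_card hsub
      unfold powerQ at h2
      unfold vuln at hS
      omega
end

section
/- Let G = (V,E) be a finite simple undirected connected graph with at least two vertices and let n = |V|. For each i ∈ V, the Shapley value of i in the coalitional game (V, p_G) equals φᵖ_i = -1 + Σ_{j adjacent to i} 1/d_j, where d_j is the degree of vertex j. That is, (1/n!) · Σ over all orderings L of V of (p_G(T_L(i) ∪ {i}) - p_G(T_L(i))) = -1 + Σ_{j ∈ N({i})} 1/d_j, where T_L(i) is the set of vertices preceding i in the ordering L. -/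
open Finset

variable {V : Type*}

/-- `T_L(i)`: the set of vertices preceding `i` in the ordering `L` of the vertices. -/
def precSet [Fintype V] [DecidableEq V] (L : V ≃ Fin (Fintype.card V)) (i : V) : Finset V :=
  Finset.univ.filter fun k => L k < L i


noncomputable def argmaxL [Fintype V] [DecidableEq V] (A : Finset V) (hA : A.Nonempty)
    (L : V ≃ Fin (Fintype.card V)) : V :=
  L.symm ((A.image L).max' (hA.image L))

lemma argmaxL_mem [Fintype V] [DecidableEq V] (A : Finset V) (hA : A.Nonempty)
    (L : V ≃ Fin (Fintype.card V)) : argmaxL A hA L ∈ A := by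
  have h := Finset.max'_mem (A.image L) (hA.image L)
  rw [Finset.mem_image] at h
  obtain ⟨a, ha, hEq⟩ := h
  rw [argmaxL, ← hEq, Equiv.symm_apply_apply]
  exact ha

lemma le_argmaxL [Fintype V] [DecidableEq V] (A : Finset V) (hA : A.Nonempty)
    (L : V ≃ Fin (Fintype.card V)) {k : V} (hk : k ∈ A) : L k ≤ L (argmaxL A hA L) := by
  rw [argmaxL, Equiv.apply_symm_apply]
  exact Finset.le_max' _ _ (Finset.mem_image_of_mem L hk)

lemma argmaxL_eq_iff [Fintype V] [DecidableEq V] (A : Finset V) (hA : A.Nonempty)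
    (L : V ≃ Fin (Fintype.card V)) {a : V} (ha : a ∈ A) :
    argmaxL A hA L = a ↔ ∀ k ∈ A, L k ≤ L a := by
  constructor
  · rintro rfl k hk; exact le_argmaxL A hA L hk
  · intro h
    have h1 : L (argmaxL A hA L) ≤ L a := h _ (argmaxL_mem A hA L)
    have h2 : L a ≤ L (argmaxL A hA L) := le_argmaxL A hA L ha
    exact L.injective (le_antisymm h1 h2)

lemma swap_mem_iff [DecidableEq V] {A : Finset V} {a b : V} (ha : a ∈ A) (hb : b ∈ A)
    (x : V) : Equiv.swap a b x ∈ A ↔ x ∈ A := by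
  rcases eq_or_ne x a with rfl | hxa
  · simp [Equiv.swap_apply_left, ha, hb]
  rcases eq_or_ne x b with rfl | hxb
  · simp [Equiv.swap_apply_right, ha, hb]
  · rw [Equiv.swap_apply_of_ne_of_ne hxa hxb]

lemma image_swap_eq [DecidableEq V] {A : Finset V} {a b : V} (ha : a ∈ A) (hb : b ∈ A) :
    A.image (Equiv.swap a b) = A := by
  ext x
  rw [Finset.mem_image]
  constructor
  · rintro ⟨y, hy, rfl⟩; exact (swap_mem_iff ha hb y).mpr hy
  · intro hx
    exact ⟨Equiv.swap a b x, (swap_mem_iff ha hb x).mpr hx, Equiv.swap_apply_self a b x⟩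

lemma argmaxL_swap [Fintype V] [DecidableEq V] (A : Finset V) (hA : A.Nonempty)
    (L : V ≃ Fin (Fintype.card V)) {a b : V} (ha : a ∈ A) (hb : b ∈ A) :
    argmaxL A hA ((Equiv.swap a b).trans L) = Equiv.swap a b (argmaxL A hA L) := by
  have himg : A.image (⇑((Equiv.swap a b).trans L)) = A.image L := by
    rw [show ⇑((Equiv.swap a b).trans L) = ⇑L ∘ ⇑(Equiv.swap a b) from rfl,
      ← Finset.image_image, image_swap_eq ha hb]
  unfold argmaxL
  simp only [himg, Equiv.symm_trans_apply]
  rfl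

lemma card_fiber_eq [Fintype V] [DecidableEq V] (A : Finset V) (hA : A.Nonempty)
    {a b : V} (ha : a ∈ A) (hb : b ∈ A) :
    (Finset.univ.filter fun L : V ≃ Fin (Fintype.card V) => argmaxL A hA L = a).card =
    (Finset.univ.filter fun L : V ≃ Fin (Fintype.card V) => argmaxL A hA L = b).card := by
  apply Finset.card_bij (fun L _ => (Equiv.swap a b).trans L)
  · intro L hL
    rw [Finset.mem_filter] at hL ⊢
    refine ⟨Finset.mem_univ _, ?_⟩
    rw [argmaxL_swap A hA L ha hb, hL.2, Equiv.swap_apply_left]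
  · intro L1 h1 L2 h2 h
    have := congrArg (Equiv.trans (Equiv.swap a b)) h
    simpa [← Equiv.trans_assoc, Equiv.swap_swap] using this
  · intro L hL
    rw [Finset.mem_filter] at hL
    refine ⟨(Equiv.swap a b).trans L, ?_, ?_⟩
    · rw [Finset.mem_filter]
      refine ⟨Finset.mem_univ _, ?_⟩
      rw [argmaxL_swap A hA L ha hb, hL.2, Equiv.swap_apply_right]
    · rw [← Equiv.trans_assoc, Equiv.swap_swap, Equiv.refl_trans]

lemma count_max [Fintype V] [DecidableEq V] (A : Finset V) {i : V} (hi : i ∈ A) :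
    A.card * (Finset.univ.filter fun L : V ≃ Fin (Fintype.card V) =>
      ∀ k ∈ A, L k ≤ L i).card = (Fintype.card V).factorial := by
  have hA : A.Nonempty := ⟨i, hi⟩
  have hfib : (Finset.univ : Finset (V ≃ Fin (Fintype.card V))).card =
      ∑ a ∈ A, (Finset.univ.filter fun L => argmaxL A hA L = a).card :=
    Finset.card_eq_sum_card_fiberwise (fun L _ => argmaxL_mem A hA L)
  have hconst : ∀ a ∈ A, (Finset.univ.filter fun L => argmaxL A hA L = a).card =
      (Finset.univ.filter fun L : V ≃ Fin (Fintype.card V) => argmaxL A hA L = i).card :=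
    fun a ha => card_fiber_eq A hA ha hi
  rw [Finset.sum_congr rfl hconst, Finset.sum_const, smul_eq_mul] at hfib
  have hfilter : (Finset.univ.filter fun L : V ≃ Fin (Fintype.card V) => argmaxL A hA L = i)
      = Finset.univ.filter fun L => ∀ k ∈ A, L k ≤ L i := by
    apply Finset.filter_congr
    intro L _
    simp only [argmaxL_eq_iff A hA L hi, eq_iff_iff]
  rw [hfilter] at hfib
  rw [← hfib, Finset.card_univ, Fintype.card_equiv (Fintype.equivFin V)]

lemma marginal [Fintype V] [DecidableEq V] (G : SimpleGraph V) [DecidableRel G.Adj]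
    {T : Finset V} {i : V} (hiT : i ∉ T) :
    powerP G (T ∪ {i}) - powerP G T =
      (((G.neighborFinset i).filter fun j => ∀ k, G.Adj j k → k ≠ i → k ∈ T).card : ℤ) - 1 := by
  set F := (G.neighborFinset i).filter fun j => ∀ k, G.Adj j k → k ≠ i → k ∈ T with hF
  have hunion : bset G (T ∪ {i}) = bset G T ∪ F := by
    ext j
    simp only [bset, hF, Finset.mem_filter, Finset.mem_union, Finset.mem_univ, true_and,
      SimpleGraph.mem_neighborFinset, Finset.mem_singleton]
    constructor
    · intro h
      by_cases hall : ∀ k, G.Adj j k → k ∈ T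
      · exact Or.inl hall
      · push_neg at hall
        obtain ⟨k0, hk0adj, hk0T⟩ := hall
        have : k0 = i := by
          rcases h k0 hk0adj with h' | h'
          exacts [absurd h' hk0T, h']
        subst this
        refine Or.inr ⟨hk0adj.symm, fun k hk hki => ?_⟩
        rcases h k hk with h' | h'
        exacts [h', absurd h' hki]
    · rintro (h | ⟨hadj, h⟩) k hk
      · exact Or.inl (h k hk)
      · rcases eq_or_ne k i with rfl | hki
        · exact Or.inr rfl
        · exact Or.inl (h k hk hki)
  have hdisj : Disjoint (bset G T) F := by
    rw [Finset.disjoint_right]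
    intro j hjF hjB
    simp only [hF, Finset.mem_filter, SimpleGraph.mem_neighborFinset] at hjF
    simp only [bset, Finset.mem_filter, Finset.mem_univ, true_and] at hjB
    exact hiT (hjB i hjF.1.symm)
  have hcardU : (T ∪ {i}).card = T.card + 1 := by
    rw [Finset.union_comm, ← Finset.insert_eq, Finset.card_insert_of_notMem hiT]
  rw [powerP, powerP, hunion, Finset.card_union_of_disjoint hdisj, hcardU]
  push_cast
  ring


/-- Let `G` be a finite simple undirected connected graph with at least two vertices and
`n = |V|`. For each vertex `i`, the Shapley value of `i` in the coalitional game `(V, p_G)`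
equals `φᵖ_i = -1 + Σ_{j adjacent to i} 1/d_j`. -/
theorem shapley_powerP
    [Fintype V] [DecidableEq V] (G : SimpleGraph V) [DecidableRel G.Adj]
    (hconn : G.Connected) (hcard : 2 ≤ Fintype.card V) (i : V) :
    (1 / ((Fintype.card V).factorial : ℝ)) *
        ∑ L : V ≃ Fin (Fintype.card V),
          ((powerP G (precSet L i ∪ {i}) : ℝ) - (powerP G (precSet L i) : ℝ)) =
      -1 + ∑ j ∈ G.neighborFinset i, (1 : ℝ) / (G.degree j : ℝ) := by
  have hn : ((Fintype.card V).factorial : ℝ) ≠ 0 := by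
    exact_mod_cast (Nat.factorial_pos _).ne'
  have hterm : ∀ L : V ≃ Fin (Fintype.card V),
      (powerP G (precSet L i ∪ {i}) : ℝ) - (powerP G (precSet L i) : ℝ) =
      (((G.neighborFinset i).filter fun j =>
        ∀ k, G.Adj j k → k ≠ i → k ∈ precSet L i).card : ℝ) - 1 := by
    intro L
    have hiT : i ∉ precSet L i := by simp [precSet]
    have h := marginal G (T := precSet L i) (i := i) hiT
    have h2 : ((powerP G (precSet L i ∪ {i}) - powerP G (precSet L i) : ℤ) : ℝ) =
        ((((G.neighborFinset i).filter fun j =>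
          ∀ k, G.Adj j k → k ≠ i → k ∈ precSet L i).card : ℤ) - 1 : ℤ) := by
      exact_mod_cast congrArg (fun z : ℤ => (z : ℝ)) h
    push_cast at h2
    linarith [h2]
  rw [Finset.sum_congr rfl fun L _ => hterm L]
  have hcond : ∀ (j : V), j ∈ G.neighborFinset i → ∀ (L : V ≃ Fin (Fintype.card V)),
      ((∀ k, G.Adj j k → k ≠ i → k ∈ precSet L i) ↔ ∀ k ∈ G.neighborFinset j, L k ≤ L i) := by
    intro j hj L
    constructor
    · intro h k hk
      rcases eq_or_ne k i with rfl | hki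
      · exact le_refl _
      · have := h k ((SimpleGraph.mem_neighborFinset _ _ _).mp hk) hki
        simp only [precSet, Finset.mem_filter] at this
        exact this.2.le
    · intro h k hk hki
      have h1 : L k ≤ L i := h k ((SimpleGraph.mem_neighborFinset _ _ _).mpr hk)
      have h2 : L k ≠ L i := fun e => hki (L.injective e)
      simp only [precSet, Finset.mem_filter, Finset.mem_univ, true_and]
      exact lt_of_le_of_ne h1 h2
  have hcardL : ∀ L : V ≃ Fin (Fintype.card V),
      (((G.neighborFinset i).filter fun j =>
        ∀ k, G.Adj j k → k ≠ i → k ∈ precSet L i).card : ℝ) =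
      ∑ j ∈ G.neighborFinset i, if ∀ k ∈ G.neighborFinset j, L k ≤ L i then (1:ℝ) else 0 := by
    intro L
    rw [Finset.card_filter]
    push_cast
    refine Finset.sum_congr rfl fun j hj => ?_
    exact if_congr (hcond j hj L) rfl rfl
  rw [Finset.sum_sub_distrib, Finset.sum_congr rfl fun L _ => hcardL L, Finset.sum_comm,
    Finset.sum_const, Finset.card_univ, Fintype.card_equiv (Fintype.equivFin V)]
  have hinner : ∀ j ∈ G.neighborFinset i,
      (∑ L : V ≃ Fin (Fintype.card V), if ∀ k ∈ G.neighborFinset j, L k ≤ L i then (1:ℝ) else 0)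
      = ((Fintype.card V).factorial : ℝ) * (1 / (G.degree j : ℝ)) := by
    intro j hj
    have hji : i ∈ G.neighborFinset j := by
      rw [SimpleGraph.mem_neighborFinset] at hj ⊢
      exact hj.symm
    have hcm := count_max (G.neighborFinset j) hji
    have hdeg : (G.neighborFinset j).card = G.degree j := rfl
    rw [hdeg] at hcm
    have hdpos : (0:ℝ) < (G.degree j : ℝ) := by
      have : 0 < G.degree j := by
        rw [← hdeg]; exact Finset.card_pos.mpr ⟨i, hji⟩
      exact_mod_cast this
    rw [Finset.sum_boole]
    have : ((G.degree j : ℝ)) * (((Finset.univ.filter fun L : V ≃ Fin (Fintype.card V) =>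
        ∀ k ∈ G.neighborFinset j, L k ≤ L i).card : ℝ)) = ((Fintype.card V).factorial : ℝ) := by
      exact_mod_cast congrArg (fun z : ℕ => (z : ℝ)) hcm
    rw [mul_one_div, eq_div_iff hdpos.ne']
    linarith [this]
  rw [Finset.sum_congr rfl hinner, ← Finset.mul_sum]
  field_simp
  ring
end

section
/- Let G = (V,E) be a finite simple undirected graph with n = |V|. For every i ∈ V, the Shapley value of i in the coalitional game (V, v_G) is the negative of the Shapley value of i in the game (V, p_G): (1/n!) · Σ over all orderings L of V of (v_G(T_L(i) ∪ {i}) - v_G(T_L(i))) = -(1/n!) · Σ over all orderings L of V of (p_G(T_L(i) ∪ {i}) - p_G(T_L(i))). -/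
open Finset

variable {V : Type*}

lemma precSet_rev [Fintype V] [DecidableEq V] (L : V ≃ Fin (Fintype.card V)) (i : V) :
    precSet (L.trans Fin.revPerm) i = (precSet L i ∪ {i})ᶜ := by
  ext k
  have hk : k = i ↔ L k = L i := by rw [L.injective.eq_iff]
  simp only [precSet, mem_filter, mem_univ, true_and, mem_compl, mem_union, mem_singleton,
    Equiv.trans_apply, Fin.revPerm_apply, hk, Fin.val_rev, Fin.lt_iff_val_lt_val,
    Fin.val_eq_val] at *
  rw [Fin.ext_iff]
  omega

lemma precSet_rev_union [Fintype V] [DecidableEq V] (L : V ≃ Fin (Fintype.card V)) (i : V) :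
    precSet (L.trans Fin.revPerm) i ∪ {i} = (precSet L i)ᶜ := by
  rw [precSet_rev]
  ext k
  by_cases hk : k = i
  · simp [hk, precSet]
  · simp [hk]

lemma revEquivInv [Fintype V] [DecidableEq V] : ∀ (L : V ≃ Fin (Fintype.card V)),
    (L.trans Fin.revPerm).trans Fin.revPerm = L := by
  intro L; ext k; simp


/-- For a finite simple undirected graph `G` and every vertex `i`, the Shapley value of `i`
in the coalitional game `(V, v_G)` is the negative of the Shapley value of `i` in the game
`(V, p_G)`. -/
theorem shapley_vuln_eq_neg_shapley_powerP
    [Fintype V] [DecidableEq V] (G : SimpleGraph V) [DecidableRel G.Adj] (i : V) :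
    (1 / ((Fintype.card V).factorial : ℝ)) *
        ∑ L : V ≃ Fin (Fintype.card V),
          ((vuln G (precSet L i ∪ {i}) : ℝ) - (vuln G (precSet L i) : ℝ)) =
      -((1 / ((Fintype.card V).factorial : ℝ)) *
        ∑ L : V ≃ Fin (Fintype.card V),
          ((powerP G (precSet L i ∪ {i}) : ℝ) - (powerP G (precSet L i) : ℝ))) := by
  have hbij : Function.Bijective
      (fun L : V ≃ Fin (Fintype.card V) => L.trans Fin.revPerm) :=
    Function.Involutive.bijective revEquivInv
  have key : ∑ L : V ≃ Fin (Fintype.card V),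
      ((powerP G (precSet L i ∪ {i}) : ℝ) - (powerP G (precSet L i) : ℝ)) =
      -∑ L : V ≃ Fin (Fintype.card V),
      ((vuln G (precSet L i ∪ {i}) : ℝ) - (vuln G (precSet L i) : ℝ)) := by
    rw [← Fintype.sum_bijective _ hbij _ _ (fun _ => rfl), ← Finset.sum_neg_distrib]
    refine Finset.sum_congr rfl fun L _ => ?_
    rw [precSet_rev_union, precSet_rev, powerP_eq_vuln_compl, powerP_eq_vuln_compl,
      compl_compl, compl_compl]
    ring
  rw [key]; ring
end

section
/- Let G = (V,E) be a finite simple undirected connected graph with at least two vertices, so every vertex has degree d_i ≥ 1. Then the vector φᵖ with components φᵖ_i = -1 + Σ_{j adjacent to i} 1/d_j belongs to the core of the game (V, p_G): for every coalition T ⊆ V, Σ_{i∈T} φᵖ_i ≥ p_G(T), equivalently Σ_{i∈T} Σ_{j ∈ N({i})} 1/d_j ≥ |B(T)|. -/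
open Finset

variable {V : Type*}

/-- Let `G` be a finite simple undirected connected graph with at least two vertices (so every
vertex has degree at least 1). The vector `φᵖ` with components
`φᵖ_i = -1 + Σ_{j adjacent to i} 1/d_j` belongs to the core of the game `(V, p_G)`: for every
coalition `T ⊆ V`, `Σ_{i ∈ T} φᵖ_i ≥ p_G(T)`, equivalently
`Σ_{i ∈ T} Σ_{j ∈ N({i})} 1/d_j ≥ |B(T)|`. -/
theorem shapley_powerP_mem_core
    [Fintype V] [DecidableEq V] (G : SimpleGraph V) [DecidableRel G.Adj]
    (hconn : G.Connected) (hcard : 2 ≤ Fintype.card V) (T : Finset V) :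
    (powerP G T : ℝ) ≤
        ∑ i ∈ T, (-1 + ∑ j ∈ G.neighborFinset i, (1 : ℝ) / (G.degree j : ℝ)) ∧
      ((bset G T).card : ℝ) ≤
        ∑ i ∈ T, ∑ j ∈ G.neighborFinset i, (1 : ℝ) / (G.degree j : ℝ) := by
  have hdeg : ∀ v : V, 0 < G.degree v := by
    intro v
    rw [G.degree_pos_iff_exists_adj]
    obtain ⟨w, hvw⟩ := Fintype.exists_ne_of_one_lt_card (by omega) v
    obtain ⟨p⟩ := hconn v w
    cases p with
    | nil => exact absurd rfl hvw.symm
    | cons h _ => exact ⟨_, h⟩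
  have hdegR : ∀ v : V, (0 : ℝ) < (G.degree v : ℝ) := fun v => by
    exact_mod_cast hdeg v
  -- main inequality
  have key : ((bset G T).card : ℝ) ≤
      ∑ i ∈ T, ∑ j ∈ G.neighborFinset i, (1 : ℝ) / (G.degree j : ℝ) := by
    have hswap : ∑ i ∈ T, ∑ j ∈ G.neighborFinset i, (1 : ℝ) / (G.degree j : ℝ)
        = ∑ j : V, ((T.filter fun i => G.Adj i j).card : ℝ) / (G.degree j : ℝ) := by
      calc ∑ i ∈ T, ∑ j ∈ G.neighborFinset i, (1 : ℝ) / (G.degree j : ℝ)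
          = ∑ i ∈ T, ∑ j : V, (if G.Adj i j then (1 : ℝ) / (G.degree j : ℝ) else 0) := by
            refine Finset.sum_congr rfl fun i _ => ?_
            rw [SimpleGraph.neighborFinset_eq_filter, Finset.sum_filter]
        _ = ∑ j : V, ∑ i ∈ T, (if G.Adj i j then (1 : ℝ) / (G.degree j : ℝ) else 0) :=
            Finset.sum_comm
        _ = ∑ j : V, ((T.filter fun i => G.Adj i j).card : ℝ) / (G.degree j : ℝ) := by
            refine Finset.sum_congr rfl fun j _ => ?_
            rw [← Finset.sum_filter, Finset.sum_const, nsmul_eq_mul, mul_one_div]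
    rw [hswap]
    have hcount : ∀ j ∈ bset G T, (T.filter fun i => G.Adj i j).card = G.degree j := by
      intro j hj
      simp only [bset, Finset.mem_filter, Finset.mem_univ, true_and] at hj
      rw [SimpleGraph.degree]
      congr 1
      ext i
      simp only [Finset.mem_filter, SimpleGraph.mem_neighborFinset]
      constructor
      · rintro ⟨-, h⟩; exact h.symm
      · intro h; exact ⟨hj i h, h.symm⟩
    calc ((bset G T).card : ℝ)
        = ∑ j ∈ bset G T, ((T.filter fun i => G.Adj i j).card : ℝ) / (G.degree j : ℝ) := by
          rw [Finset.sum_congr rfl fun j hj => by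
            rw [hcount j hj, div_self (ne_of_gt (hdegR j))]]
          simp
      _ ≤ ∑ j : V, ((T.filter fun i => G.Adj i j).card : ℝ) / (G.degree j : ℝ) := by
          refine Finset.sum_le_sum_of_subset_of_nonneg (Finset.subset_univ _) ?_
          intro j _ _
          positivity
  refine ⟨?_, key⟩
  have : ∑ i ∈ T, (-1 + ∑ j ∈ G.neighborFinset i, (1 : ℝ) / (G.degree j : ℝ))
      = -(T.card : ℝ) + ∑ i ∈ T, ∑ j ∈ G.neighborFinset i, (1 : ℝ) / (G.degree j : ℝ) := by
    rw [Finset.sum_add_distrib, Finset.sum_const]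
    ring
  rw [this, powerP]
  push_cast
  linarith
end
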